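/- Let G be a weighted digraph with Laplacian L. Define Q_0 = I and recursively σ_{k+1} = tr(L Q_k)/(k+1), Q_{k+1} = -L Q_k + σ_{k+1} I. Then for every k, σ_k equals the total weight of spanning in-forests of G with k arcs, and the (i,j) entry of Q_k equals the total weight of in-forests with k arcs in which i lies in the tree converging to j. -/

import Mathlib

open scoped Classical
open Finset Matrix

namespace MFPT

variable {n : ℕ}

/-- The step relation of a functional subgraph: `a → b` when `F a = some b`. -/
def Step (F : Fin n → Option (Fin n)) (a b : Fin n) : Prop := F a = some b

/-- `F` is a spanning in-forest of the weighted digraph with weight matrix `w`: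
every chosen arc is a genuine (loopless, positive-weight) arc and there is no directed cycle.
Each weak component of such a functional digraph is a converging tree (root = the vertex
mapped to `none`). -/
def IsInForest (w : Matrix (Fin n) (Fin n) ℝ) (F : Fin n → Option (Fin n)) : Prop :=
  (∀ v u, F v = some u → v ≠ u ∧ 0 < w v u) ∧ ∀ v, ¬ Relation.TransGen (Step F) v v

/-- Weight of a spanning subgraph: the product of its arc weights. -/
noncomputable def forestWeight (w : Matrix (Fin n) (Fin n) ℝ) (F : Fin n → Option (Fin n)) : ℝ :=
  ∏ v, (F v).elim 1 (fun u => w v u)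

/-- Number of arcs of a functional subgraph. -/
def arcCount (F : Fin n → Option (Fin n)) : ℕ :=
  (Finset.univ.filter fun v => (F v).isSome).card

/-- Vertex `i` belongs to the tree of `F` converging to (rooted at) `j`. -/
def InTreeOf (F : Fin n → Option (Fin n)) (i j : Fin n) : Prop :=
  Relation.ReflTransGen (Step F) i j ∧ F j = none

/-- `σ_k`: total weight of spanning in-forests with `k` arcs. -/
noncomputable def sigmaW (w : Matrix (Fin n) (Fin n) ℝ) (k : ℕ) : ℝ :=
  ∑ F : Fin n → Option (Fin n),
    if IsInForest w F ∧ arcCount F = k then forestWeight w F else 0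

/-- `Q_k`: the matrix whose `(i,j)` entry is the total weight of in-forests with `k` arcs
in which `i` belongs to the tree converging to `j`. -/
noncomputable def Qmat (w : Matrix (Fin n) (Fin n) ℝ) (k : ℕ) : Matrix (Fin n) (Fin n) ℝ :=
  Matrix.of fun i j => ∑ F : Fin n → Option (Fin n),
    if IsInForest w F ∧ arcCount F = k ∧ InTreeOf F i j then forestWeight w F else 0

/-- `q_j`: total weight of spanning trees converging to `j` (in-forests with `n-1` arcs
whose unique root is `j`). -/
noncomputable def treeWeight (w : Matrix (Fin n) (Fin n) ℝ) (j : Fin n) : ℝ :=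
  ∑ F : Fin n → Option (Fin n),
    if IsInForest w F ∧ arcCount F = n - 1 ∧ F j = none then forestWeight w F else 0

/-- `f_{ij}`: total weight of 2-tree in-forests having one tree containing `i` and the other
tree converging to `j`. -/
noncomputable def fWeight (w : Matrix (Fin n) (Fin n) ℝ) (i j : Fin n) : ℝ :=
  ∑ F : Fin n → Option (Fin n),
    if IsInForest w F ∧ arcCount F = n - 2 ∧ F j = none ∧
        ¬ Relation.ReflTransGen (Step F) i j
      then forestWeight w F else 0

/-- The Laplacian matrix of the weighted digraph with weight matrix `w`. -/
noncomputable def lap (w : Matrix (Fin n) (Fin n) ℝ) : Matrix (Fin n) (Fin n) ℝ :=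
  Matrix.of fun i j => if i = j then ∑ k ∈ Finset.univ.erase i, w i k else - w i j

/-- `X` is the group inverse of `L`. -/
def IsGroupInverse (L X : Matrix (Fin n) (Fin n) ℝ) : Prop :=
  L * X * L = L ∧ X * L * X = X ∧ L * X = X * L

/-- `T` is (row-)stochastic. -/
def IsStochastic (T : Matrix (Fin n) (Fin n) ℝ) : Prop :=
  (∀ i j, 0 ≤ T i j) ∧ ∀ i, ∑ j, T i j = 1

/-- Irreducibility of `T`. -/
def IsIrreducible (T : Matrix (Fin n) (Fin n) ℝ) : Prop :=
  ∀ i j, ∃ k : ℕ, 0 < (T ^ k) i j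

/-- Ergodicity (primitivity) of `T`: some power of `T` is entrywise positive. -/
def IsErgodic (T : Matrix (Fin n) (Fin n) ℝ) : Prop :=
  ∃ N : ℕ, ∀ i j, 0 < (T ^ N) i j

/-- `π` is a stationary distribution of `T`. -/
def IsStationary (T : Matrix (Fin n) (Fin n) ℝ) (π : Fin n → ℝ) : Prop :=
  (∀ i, 0 ≤ π i) ∧ (∑ i, π i = 1) ∧ ∀ j, ∑ i, π i * T i j = π j

/-- Probability of the trajectory `p` of length `k` under transition matrix `T`. -/
noncomputable def pathProb (T : Matrix (Fin n) (Fin n) ℝ) (k : ℕ)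
    (p : Fin (k + 1) → Fin n) : ℝ :=
  ∏ t : Fin k, T (p t.castSucc) (p t.succ)

/-- `Pr(F_{ij} = k)`: probability that, starting at `i`, the chain first reaches `j`
(at a step `p ≥ 1`) exactly at time `k`. -/
noncomputable def firstPassageProb (T : Matrix (Fin n) (Fin n) ℝ) (i j : Fin n) (k : ℕ) : ℝ :=
  ∑ p : Fin (k + 1) → Fin n,
    if p 0 = i ∧ p (Fin.last k) = j ∧
        (∀ t : Fin (k + 1), t ≠ 0 → t ≠ Fin.last k → p t ≠ j)
      then pathProb T k p else 0

/-- Mean first passage time `m_{ij} = E F_{ij} = ∑ k k·Pr(F_{ij}=k)`. -/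
noncomputable def mfpt (T : Matrix (Fin n) (Fin n) ℝ) (i j : Fin n) : ℝ :=
  ∑' k : ℕ, (k : ℝ) * firstPassageProb T i j k

end MFPT


namespace MFPT

variable {n : ℕ}

abbrev Fun (n : ℕ) := Fin n → Option (Fin n)

lemma step_fun {F : Fun n} {a b c : Fin n} (h1 : Step F a b) (h2 : Step F a c) : b = c := by
  unfold Step at h1 h2; rw [h1] at h2; exact Option.some_inj.mp h2

lemma reach_congr_split {F G : Fun n} {i : Fin n} (h : ∀ c, c ≠ i → F c = G c)
    {a b : Fin n} (hab : Relation.ReflTransGen (Step F) a b) :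
    Relation.ReflTransGen (Step G) a b ∨ Relation.ReflTransGen (Step G) a i := by
  induction hab using Relation.ReflTransGen.head_induction_on with
  | refl => exact Or.inl .refl
  | @head a' c' hstep hrest ih =>
    by_cases hai : a' = i
    · subst hai; exact Or.inr .refl
    · have hstep' : Step G a' c' := by unfold Step at hstep ⊢; rw [← h a' hai]; exact hstep
      rcases ih with h1 | h1
      · exact Or.inl (h1.head hstep')
      · exact Or.inr (h1.head hstep')

lemma reach_to {F G : Fun n} {i : Fin n} (h : ∀ c, c ≠ i → F c = G c)
    {a : Fin n} (hab : Relation.ReflTransGen (Step F) a i) :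
    Relation.ReflTransGen (Step G) a i :=
  (reach_congr_split h hab).elim id id

lemma reach_total {F : Fun n} {a b : Fin n} (hab : Relation.ReflTransGen (Step F) a b) :
    ∀ {c}, Relation.ReflTransGen (Step F) a c →
      Relation.ReflTransGen (Step F) b c ∨ Relation.ReflTransGen (Step F) c b := by
  induction hab using Relation.ReflTransGen.head_induction_on with
  | refl => exact fun hac => Or.inl hac
  | @head a' c' hstep hrest ih =>
    intro c hac
    rcases hac.cases_head with rfl | ⟨e, hae, hec⟩
    · exact Or.inr (Relation.ReflTransGen.head hstep hrest)
    · exact ih ((step_fun hae hstep) ▸ hec)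

lemma cycle_propagate {F : Fun n} {v x : Fin n} (hv : Relation.TransGen (Step F) v v)
    (hvx : Relation.ReflTransGen (Step F) v x) : Relation.TransGen (Step F) x x := by
  revert hv
  induction hvx using Relation.ReflTransGen.head_induction_on with
  | refl => exact id
  | @head a' c' hstep hrest ih =>
    intro hv
    rcases Relation.TransGen.head'_iff.mp hv with ⟨b, hb, hba⟩
    have hbc : b = c' := step_fun hb hstep
    subst hbc
    exact ih (Relation.TransGen.tail' hba hstep)

lemma transGen_congr_split {F G : Fun n} {i : Fin n} (h : ∀ c, c ≠ i → F c = G c)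
    {a b : Fin n} (hab : Relation.TransGen (Step F) a b) :
    Relation.TransGen (Step G) a b ∨ Relation.ReflTransGen (Step F) a i := by
  induction hab using Relation.TransGen.head_induction_on with
  | single hstep =>
    rename_i a'
    by_cases hai : a' = i
    · exact Or.inr (hai ▸ Relation.ReflTransGen.refl)
    · exact Or.inl (Relation.TransGen.single
        (by unfold Step at hstep ⊢; rw [← h a' hai]; exact hstep))
  | head hstep hrest ihh =>
    rename_i a' c'
    by_cases hai : a' = i
    · exact Or.inr (hai ▸ Relation.ReflTransGen.refl)
    · rcases ihh with h1 | h1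
      · exact Or.inl (Relation.TransGen.head
          (by unfold Step at hstep ⊢; rw [← h a' hai]; exact hstep) h1)
      · exact Or.inr (Relation.ReflTransGen.head hstep h1)

lemma step_update_noteq {F : Fun n} {i a b : Fin n} {x : Option (Fin n)} (hai : a ≠ i)
    (hs : Step (Function.update F i x) a b) : Step F a b := by
  unfold Step at hs ⊢; rwa [Function.update_of_ne hai] at hs

lemma step_update_none {F : Fun n} {i a b : Fin n}
    (hs : Step (Function.update F i none) a b) : Step F a b := by
  by_cases hai : a = i
  · subst hai; unfold Step at hs; rw [Function.update_self] at hs; cases hs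
  · exact step_update_noteq hai hs

lemma agree_update {F : Fun n} {i : Fin n} {x : Option (Fin n)} :
    ∀ c, c ≠ i → Function.update F i x c = F c := fun _ hc => Function.update_of_ne hc _ _

lemma agree_update' {F : Fun n} {i : Fin n} {x : Option (Fin n)} :
    ∀ c, c ≠ i → F c = Function.update F i x c := fun _ hc => (Function.update_of_ne hc _ _).symm

lemma acyclic_update_some {F : Fun n} {i m : Fin n}
    (hac : ∀ v, ¬ Relation.TransGen (Step F) v v)
    (hmi : ¬ Relation.ReflTransGen (Step F) m i) :
    ∀ v, ¬ Relation.TransGen (Step (Function.update F i (some m))) v v := by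
  intro v hv
  rcases transGen_congr_split (agree_update (x := some m)) hv with h | h
  · exact hac v h
  · have hii : Relation.TransGen (Step (Function.update F i (some m))) i i :=
      cycle_propagate hv h
    rcases Relation.TransGen.head'_iff.mp hii with ⟨b, hb, hbi⟩
    have hbm : b = m := by
      unfold Step at hb; rw [Function.update_self] at hb; exact (Option.some_inj.mp hb).symm
    exact hmi (reach_to (agree_update (x := some m)) (hbm ▸ hbi))

lemma isInForest_update_some {w : Matrix (Fin n) (Fin n) ℝ} {F : Fun n} {i m : Fin n}
    (hF : IsInForest w F) (him : i ≠ m) (hwim : 0 < w i m)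
    (hmi : ¬ Relation.ReflTransGen (Step F) m i) :
    IsInForest w (Function.update F i (some m)) := by
  constructor
  · intro v u hv
    by_cases hvi : v = i
    · subst hvi; rw [Function.update_self] at hv
      cases Option.some_inj.mp hv; exact ⟨him, hwim⟩
    · rw [Function.update_of_ne hvi] at hv; exact hF.1 v u hv
  · exact acyclic_update_some hF.2 hmi

lemma isInForest_update_none {w : Matrix (Fin n) (Fin n) ℝ} {F : Fun n} {i : Fin n}
    (hF : IsInForest w F) : IsInForest w (Function.update F i none) :=
  ⟨fun v u hv => hF.1 v u (step_update_none hv),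
   fun v hv => hF.2 v (Relation.TransGen.mono (fun _ _ h => step_update_none h) _ _ hv)⟩

lemma root_eq {F : Fun n} {a b : Fin n} (h : Relation.ReflTransGen (Step F) a b)
    (ha : F a = none) : a = b := by
  rcases h.cases_head with rfl | ⟨c, hc, _⟩
  · rfl
  · unfold Step at hc; rw [ha] at hc; cases hc

lemma arcCount_update (F : Fun n) (i : Fin n) (x : Option (Fin n)) :
    arcCount (Function.update F i x) + (if (F i).isSome then 1 else 0)
      = arcCount F + (if x.isSome then 1 else 0) := by
  unfold arcCount
  rw [Finset.card_filter, Finset.card_filter]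
  have h1 : (fun v => if (Function.update F i x v).isSome then 1 else 0)
      = Function.update (fun v => if (F v).isSome then (1:ℕ) else 0) i
          (if x.isSome then 1 else 0) := by
    funext v
    by_cases hvi : v = i
    · subst hvi; simp
    · simp [Function.update_of_ne hvi]
  rw [h1, Finset.sum_update_of_mem (Finset.mem_univ i)]
  rw [← Finset.add_sum_erase Finset.univ _ (Finset.mem_univ i), Finset.erase_eq]
  ring

lemma arcCount_update_some_of_none {F : Fun n} {i m : Fin n} (h : F i = none) :
    arcCount (Function.update F i (some m)) = arcCount F + 1 := by
  have := arcCount_update F i (some m)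
  rw [h] at this; simpa using this

lemma arcCount_update_none_of_some {F : Fun n} {i u : Fin n} (h : F i = some u) :
    arcCount (Function.update F i none) + 1 = arcCount F := by
  have := arcCount_update F i none
  rw [h] at this; simpa using this

lemma arcCount_update_some_of_some {F : Fun n} {i u m : Fin n} (h : F i = some u) :
    arcCount (Function.update F i (some m)) = arcCount F := by
  have := arcCount_update F i (some m)
  rw [h] at this; simpa using this

lemma forestWeight_update (w : Matrix (Fin n) (Fin n) ℝ) (F : Fun n) (i : Fin n)
    (x : Option (Fin n)) :
    forestWeight w (Function.update F i x) * ((F i).elim 1 (w i))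
      = forestWeight w F * (x.elim 1 (w i)) := by
  unfold forestWeight
  rw [← Finset.mul_prod_erase Finset.univ _ (Finset.mem_univ i),
      ← Finset.mul_prod_erase Finset.univ (fun v => (F v).elim 1 (fun u => w v u))
        (Finset.mem_univ i)]
  have h2 : ∏ v ∈ Finset.univ.erase i, (Function.update F i x v).elim 1 (fun u => w v u)
      = ∏ v ∈ Finset.univ.erase i, (F v).elim 1 (fun u => w v u) :=
    Finset.prod_congr rfl fun v hv => by
      rw [Function.update_of_ne (Finset.ne_of_mem_erase hv)]
  rw [Function.update_self, h2]
  ring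

end MFPT


namespace MFPT

variable {n : ℕ}

lemma ite_split (C D : Prop) {iC : Decidable C} {i1 : Decidable (C ∧ D)}
    {i2 : Decidable (C ∧ ¬D)} (x : ℝ) :
    @ite _ C iC x 0 = @ite _ (C ∧ D) i1 x 0 + @ite _ (C ∧ ¬D) i2 x 0 := by
  by_cases hC : C <;> by_cases hD : D <;> simp [hC, hD]

lemma sum_split {β : Type*} [Fintype β] (f : β → ℝ) (C D : β → Prop)
    {iC : ∀ x, Decidable (C x)} [i1 : ∀ x, Decidable (C x ∧ D x)]
    [i2 : ∀ x, Decidable (C x ∧ ¬ D x)] :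
    (∑ x : β, @ite _ (C x) (iC x) (f x) 0)
      = (∑ x : β, @ite _ (C x ∧ D x) (i1 x) (f x) 0)
        + ∑ x : β, @ite _ (C x ∧ ¬ D x) (i2 x) (f x) 0 := by
  rw [← Finset.sum_add_distrib]
  exact Finset.sum_congr rfl fun x _ => ite_split (C x) (D x) (f x)

lemma sum_cond_congr {β : Type*} [Fintype β] (f : β → ℝ) {C D : β → Prop}
    {iC : ∀ x, Decidable (C x)} {iD : ∀ x, Decidable (D x)} (h : ∀ x, C x ↔ D x) :
    (∑ x : β, @ite _ (C x) (iC x) (f x) 0) = ∑ x : β, @ite _ (D x) (iD x) (f x) 0 :=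
  Finset.sum_congr rfl fun x _ => if_congr (h x) rfl rfl

lemma collapse (i : Fin n) (f : Fun n → ℝ) (C : Fun n → Prop)
    {i1 : ∀ F, Decidable ((F i).isSome ∧ C F)}
    {i2 : ∀ u F, Decidable (F i = some u ∧ C F)} :
    (∑ F : Fun n, @ite _ ((F i).isSome ∧ C F) (i1 F) (f F) 0)
      = ∑ u : Fin n, ∑ F : Fun n, @ite _ (F i = some u ∧ C F) (i2 u F) (f F) 0 := by
  have hL : (∑ F : Fun n, @ite _ ((F i).isSome ∧ C F) (i1 F) (f F) 0)
      = ∑ F : Fun n, @ite _ ((F i).isSome ∧ C F) (Classical.propDecidable _) (f F) 0 :=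
    Finset.sum_congr rfl fun F _ => by
      rw [Subsingleton.elim (i1 F) (Classical.propDecidable _)]
  have hR : (∑ u : Fin n, ∑ F : Fun n, @ite _ (F i = some u ∧ C F) (i2 u F) (f F) 0)
      = ∑ u : Fin n, ∑ F : Fun n,
          @ite _ (F i = some u ∧ C F) (Classical.propDecidable _) (f F) 0 :=
    Finset.sum_congr rfl fun u _ => Finset.sum_congr rfl fun F _ => by
      rw [Subsingleton.elim (i2 u F) (Classical.propDecidable _)]
  rw [hL, hR]
  rw [Finset.sum_comm]
  refine Finset.sum_congr rfl fun F _ => ?_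
  cases h : F i with
  | none => simp [h]
  | some u₀ =>
    by_cases hC : C F
    · simp only [h, Option.isSome_some, true_and, hC, and_true, if_true, Option.some_inj]
      rw [Finset.sum_eq_single u₀]
      · simp
      · intro u _ hu; simp [Ne.symm hu]
      · intro hu; exact absurd (Finset.mem_univ u₀) hu
    · simp [h, hC]

end MFPT


namespace MFPT

variable {n : ℕ}

lemma addArc_bij (w : Matrix (Fin n) (Fin n) ℝ) (i m : Fin n) (k : ℕ) (P : Fun n → Prop) :
    (∑ F : Fun n, if F i = some m ∧ IsInForest w F ∧ arcCount F = k + 1 ∧ P F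
        then forestWeight w F else 0)
      = ∑ F : Fun n, if m ≠ i ∧ 0 < w i m ∧ IsInForest w F ∧ arcCount F = k ∧ F i = none ∧
            ¬ Relation.ReflTransGen (Step F) m i ∧ P (Function.update F i (some m))
          then w i m * forestWeight w F else 0 := by
  rw [← Finset.sum_filter, ← Finset.sum_filter]
  refine Finset.sum_nbij' (fun F => Function.update F i none)
    (fun F => Function.update F i (some m)) ?_ ?_ ?_ ?_ ?_
  · intro F hF
    obtain ⟨hFi, hfor, harc, hP⟩ := (Finset.mem_filter.mp hF).2
    have him : i ≠ m ∧ 0 < w i m := hfor.1 i m hFi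
    have harc' : arcCount (Function.update F i none) = k := by
      have := arcCount_update_none_of_some (i := i) hFi
      omega
    refine Finset.mem_filter.mpr ⟨Finset.mem_univ _, Ne.symm him.1, him.2,
      isInForest_update_none hfor, harc', Function.update_self i none F, ?_, ?_⟩
    · intro hreach
      have h1 : Relation.ReflTransGen (Step F) m i :=
        Relation.ReflTransGen.mono (fun _ _ h => step_update_none h) _ _ hreach
      exact hfor.2 i (Relation.TransGen.head' hFi h1)
    · rw [Function.update_idem, show (some m) = F i from hFi.symm, Function.update_eq_self]
      exact hP
  · intro F hF
    obtain ⟨hmi', hw', hfor, harc, hFi, hreach, hP⟩ := (Finset.mem_filter.mp hF).2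
    refine Finset.mem_filter.mpr ⟨Finset.mem_univ _, Function.update_self i (some m) F,
      isInForest_update_some hfor (Ne.symm hmi') hw' hreach, ?_, hP⟩
    rw [arcCount_update_some_of_none hFi, harc]
  · intro F hF
    obtain ⟨hFi, _, _, _⟩ := (Finset.mem_filter.mp hF).2
    show Function.update (Function.update F i none) i (some m) = F
    rw [Function.update_idem, show (some m) = F i from hFi.symm, Function.update_eq_self]
  · intro F hF
    obtain ⟨_, _, _, _, hFi, _, _⟩ := (Finset.mem_filter.mp hF).2
    show Function.update (Function.update F i (some m)) i none = F
    rw [Function.update_idem, show (none : Option (Fin n)) = F i from hFi.symm,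
      Function.update_eq_self]
  · intro F hF
    obtain ⟨hFi, _, _, _⟩ := (Finset.mem_filter.mp hF).2
    have h := forestWeight_update w F i none
    rw [hFi] at h
    simp only [Option.elim_some, Option.elim_none, mul_one] at h
    rw [← h]; ring

lemma sum_addArc (w : Matrix (Fin n) (Fin n) ℝ) (i : Fin n) (k : ℕ) (P : Fun n → Prop) :
    (∑ F : Fun n, if IsInForest w F ∧ arcCount F = k + 1 ∧ (F i).isSome ∧ P F
        then forestWeight w F else 0)
      = ∑ m : Fin n, ∑ F : Fun n,
          if m ≠ i ∧ 0 < w i m ∧ IsInForest w F ∧ arcCount F = k ∧ F i = none ∧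
              ¬ Relation.ReflTransGen (Step F) m i ∧ P (Function.update F i (some m))
            then w i m * forestWeight w F else 0 := by
  have h1 : (∑ F : Fun n, if IsInForest w F ∧ arcCount F = k + 1 ∧ (F i).isSome ∧ P F
        then forestWeight w F else 0)
      = ∑ F : Fun n, if (F i).isSome ∧ IsInForest w F ∧ arcCount F = k + 1 ∧ P F
          then forestWeight w F else 0 :=
    sum_cond_congr _ fun F => by tauto
  rw [h1, collapse]
  exact Finset.sum_congr rfl fun m _ => addArc_bij w i m k P

end MFPT


namespace MFPT

variable {n : ℕ}

lemma intree_isSome {F : Fun n} {i j : Fin n} (hij : i ≠ j) (h : InTreeOf F i j) :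
    (F i).isSome := by
  rcases h.1.cases_head with rfl | ⟨c, hc, _⟩
  · exact absurd rfl hij
  · unfold Step at hc; rw [hc]; rfl

lemma reach_tail_of_intree {F : Fun n} {i j u : Fin n} (hij : i ≠ j) (h : InTreeOf F i j)
    (hFi : F i = some u) : Relation.ReflTransGen (Step F) u j := by
  rcases h.1.cases_head with rfl | ⟨c, hc, hcj⟩
  · exact absurd rfl hij
  · have : c = u := step_fun hc hFi
    exact this ▸ hcj

lemma step_update_same (F : Fun n) (i m : Fin n) :
    Step (Function.update F i (some m)) i m := by
  unfold Step; exact Function.update_self i (some m) F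

lemma triple_sum_eq {β γ δ : Type*} [Fintype β] [Fintype γ] [Fintype δ] (f : β × γ × δ → ℝ) :
    (∑ x : β × γ × δ, f x) = ∑ a : β, ∑ b : γ, ∑ c : δ, f (a, b, c) := by
  rw [Fintype.sum_prod_type]
  exact Finset.sum_congr rfl fun a _ => by rw [Fintype.sum_prod_type]

lemma swap_bij (w : Matrix (Fin n) (Fin n) ℝ) {i j : Fin n} (hij : i ≠ j) (k : ℕ) :
    (∑ m : Fin n, ∑ u : Fin n, ∑ F : Fun n,
        if F i = some u ∧ m ≠ i ∧ 0 < w i m ∧ IsInForest w F ∧ arcCount F = k ∧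
            InTreeOf F i j ∧ ¬ InTreeOf F m j
          then w i m * forestWeight w F else 0)
      = ∑ m : Fin n, ∑ u : Fin n, ∑ F : Fun n,
          if F i = some u ∧ m ≠ i ∧ 0 < w i m ∧ IsInForest w F ∧ arcCount F = k ∧
              InTreeOf F m j ∧ ¬ InTreeOf F i j
            then w i m * forestWeight w F else 0 := by
  have hA : (∑ m : Fin n, ∑ u : Fin n, ∑ F : Fun n,
        if F i = some u ∧ m ≠ i ∧ 0 < w i m ∧ IsInForest w F ∧ arcCount F = k ∧
            InTreeOf F i j ∧ ¬ InTreeOf F m j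
          then w i m * forestWeight w F else 0)
      = ∑ x : Fin n × Fin n × Fun n,
          if x.2.2 i = some x.2.1 ∧ x.1 ≠ i ∧ 0 < w i x.1 ∧ IsInForest w x.2.2 ∧
              arcCount x.2.2 = k ∧ InTreeOf x.2.2 i j ∧ ¬ InTreeOf x.2.2 x.1 j
            then w i x.1 * forestWeight w x.2.2 else 0 :=
    (triple_sum_eq (fun x : Fin n × Fin n × Fun n =>
      if x.2.2 i = some x.2.1 ∧ x.1 ≠ i ∧ 0 < w i x.1 ∧ IsInForest w x.2.2 ∧
          arcCount x.2.2 = k ∧ InTreeOf x.2.2 i j ∧ ¬ InTreeOf x.2.2 x.1 j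
        then w i x.1 * forestWeight w x.2.2 else 0)).symm
  have hB : (∑ m : Fin n, ∑ u : Fin n, ∑ F : Fun n,
        if F i = some u ∧ m ≠ i ∧ 0 < w i m ∧ IsInForest w F ∧ arcCount F = k ∧
            InTreeOf F m j ∧ ¬ InTreeOf F i j
          then w i m * forestWeight w F else 0)
      = ∑ x : Fin n × Fin n × Fun n,
          if x.2.2 i = some x.2.1 ∧ x.1 ≠ i ∧ 0 < w i x.1 ∧ IsInForest w x.2.2 ∧
              arcCount x.2.2 = k ∧ InTreeOf x.2.2 x.1 j ∧ ¬ InTreeOf x.2.2 i j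
            then w i x.1 * forestWeight w x.2.2 else 0 :=
    (triple_sum_eq (fun x : Fin n × Fin n × Fun n =>
      if x.2.2 i = some x.2.1 ∧ x.1 ≠ i ∧ 0 < w i x.1 ∧ IsInForest w x.2.2 ∧
          arcCount x.2.2 = k ∧ InTreeOf x.2.2 x.1 j ∧ ¬ InTreeOf x.2.2 i j
        then w i x.1 * forestWeight w x.2.2 else 0)).symm
  rw [hA, hB, ← Finset.sum_filter, ← Finset.sum_filter]
  refine Finset.sum_nbij'
    (fun x => (x.2.1, x.1, Function.update x.2.2 i (some x.1)))
    (fun x => (x.2.1, x.1, Function.update x.2.2 i (some x.1))) ?_ ?_ ?_ ?_ ?_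
  · rintro ⟨m, u, F⟩ hx
    obtain ⟨hFi, hmi, hwim, hfor, harc, hitij, hnm⟩ := (Finset.mem_filter.mp hx).2
    dsimp only at hFi hmi hwim hfor harc hitij hnm ⊢
    have hiu := hfor.1 i u hFi
    have hFj : F j = none := hitij.2
    have hruj : Relation.ReflTransGen (Step F) u j := reach_tail_of_intree hij hitij hFi
    have hreach_mi : ¬ Relation.ReflTransGen (Step F) m i :=
      fun h => hnm ⟨h.trans hitij.1, hFj⟩
    have hfor' : IsInForest w (Function.update F i (some m)) :=
      isInForest_update_some hfor (Ne.symm hmi) hwim hreach_mi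
    have hnoback : ¬ Relation.ReflTransGen (Step (Function.update F i (some m))) u i := by
      intro h
      exact hfor.2 i (Relation.TransGen.head' hFi (reach_to agree_update h))
    have hruj' : Relation.ReflTransGen (Step (Function.update F i (some m))) u j := by
      rcases reach_congr_split agree_update' hruj with h1 | h1
      · exact h1
      · exact absurd h1 hnoback
    refine Finset.mem_filter.mpr ⟨Finset.mem_univ _, ?_, ?_, ?_, ?_, ?_, ?_, ?_⟩
    · show Function.update F i (some m) i = some m
      exact Function.update_self i (some m) F
    · exact Ne.symm hiu.1
    · exact hiu.2
    · exact hfor'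
    · show arcCount (Function.update F i (some m)) = k
      rw [arcCount_update_some_of_some hFi]; exact harc
    · show InTreeOf (Function.update F i (some m)) u j
      refine ⟨hruj', ?_⟩
      show Function.update F i (some m) j = none
      rw [Function.update_of_ne (Ne.symm hij)]; exact hFj
    · show ¬ InTreeOf (Function.update F i (some m)) i j
      rintro ⟨hr, -⟩
      rcases hr.cases_head with rfl | ⟨c, hic, hcj⟩
      · exact hij rfl
      · have hcm : c = m := step_fun hic (step_update_same F i m)
        subst hcm
        rcases reach_congr_split agree_update hcj with h1 | h1
        · exact hnm ⟨h1, hFj⟩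
        · exact hreach_mi h1
  · rintro ⟨m, u, F⟩ hx
    obtain ⟨hFi, hmi, hwim, hfor, harc, hitmj, hnij⟩ := (Finset.mem_filter.mp hx).2
    dsimp only at hFi hmi hwim hfor harc hitmj hnij ⊢
    have hiu := hfor.1 i u hFi
    have hFj : F j = none := hitmj.2
    have hnrij : ¬ Relation.ReflTransGen (Step F) i j := fun h => hnij ⟨h, hFj⟩
    have hreach_mi : ¬ Relation.ReflTransGen (Step F) m i := by
      intro h
      rcases reach_total h hitmj.1 with h1 | h1
      · exact hnrij h1
      · exact hij (root_eq h1 hFj).symm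
    have hfor2 : IsInForest w (Function.update F i (some m)) :=
      isInForest_update_some hfor (Ne.symm hmi) hwim hreach_mi
    have hrmj2 : Relation.ReflTransGen (Step (Function.update F i (some m))) m j := by
      rcases reach_congr_split agree_update' hitmj.1 with h1 | h1
      · exact h1
      · exact absurd (reach_to agree_update h1) hreach_mi
    refine Finset.mem_filter.mpr ⟨Finset.mem_univ _, ?_, ?_, ?_, ?_, ?_, ?_, ?_⟩
    · show Function.update F i (some m) i = some m
      exact Function.update_self i (some m) F
    · exact Ne.symm hiu.1
    · exact hiu.2
    · exact hfor2
    · show arcCount (Function.update F i (some m)) = k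
      rw [arcCount_update_some_of_some hFi]; exact harc
    · show InTreeOf (Function.update F i (some m)) i j
      refine ⟨Relation.ReflTransGen.head (step_update_same F i m) hrmj2, ?_⟩
      show Function.update F i (some m) j = none
      rw [Function.update_of_ne (Ne.symm hij)]; exact hFj
    · show ¬ InTreeOf (Function.update F i (some m)) u j
      rintro ⟨hr, -⟩
      rcases reach_congr_split agree_update hr with h1 | h1
      · exact hnrij (Relation.ReflTransGen.head hFi h1)
      · exact hfor.2 i (Relation.TransGen.head' hFi h1)
  · rintro ⟨m, u, F⟩ hx
    obtain ⟨hFi, -⟩ := (Finset.mem_filter.mp hx).2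
    dsimp only at hFi
    show (m, u, Function.update (Function.update F i (some m)) i (some u)) = (m, u, F)
    rw [Function.update_idem, show (some u) = F i from hFi.symm, Function.update_eq_self]
  · rintro ⟨m, u, F⟩ hx
    obtain ⟨hFi, -⟩ := (Finset.mem_filter.mp hx).2
    dsimp only at hFi
    show (m, u, Function.update (Function.update F i (some m)) i (some u)) = (m, u, F)
    rw [Function.update_idem, show (some u) = F i from hFi.symm, Function.update_eq_self]
  · rintro ⟨m, u, F⟩ hx
    obtain ⟨hFi, -⟩ := (Finset.mem_filter.mp hx).2
    dsimp only at hFi ⊢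
    have h := forestWeight_update w F i (some m)
    rw [hFi] at h
    simp only [Option.elim_some] at h
    linarith [h]

end MFPT


namespace MFPT

variable {n : ℕ}

lemma sum_swapArc (w : Matrix (Fin n) (Fin n) ℝ) {i j : Fin n} (hij : i ≠ j) (k : ℕ) :
    (∑ m : Fin n, ∑ F : Fun n,
        if m ≠ i ∧ 0 < w i m ∧ IsInForest w F ∧ arcCount F = k ∧ InTreeOf F i j ∧
            ¬ InTreeOf F m j
          then w i m * forestWeight w F else 0)
      = ∑ m : Fin n, ∑ F : Fun n,
          if m ≠ i ∧ 0 < w i m ∧ IsInForest w F ∧ arcCount F = k ∧ InTreeOf F m j ∧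
              ¬ InTreeOf F i j ∧ (F i).isSome
            then w i m * forestWeight w F else 0 := by
  have hL : ∀ m : Fin n,
      (∑ F : Fun n, if m ≠ i ∧ 0 < w i m ∧ IsInForest w F ∧ arcCount F = k ∧ InTreeOf F i j ∧
            ¬ InTreeOf F m j then w i m * forestWeight w F else 0)
        = ∑ u : Fin n, ∑ F : Fun n,
            if F i = some u ∧ m ≠ i ∧ 0 < w i m ∧ IsInForest w F ∧ arcCount F = k ∧
                InTreeOf F i j ∧ ¬ InTreeOf F m j
              then w i m * forestWeight w F else 0 := by
    intro m
    rw [← collapse i (fun F => w i m * forestWeight w F)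
      (fun F => m ≠ i ∧ 0 < w i m ∧ IsInForest w F ∧ arcCount F = k ∧ InTreeOf F i j ∧
        ¬ InTreeOf F m j)]
    exact sum_cond_congr _ fun F =>
      ⟨fun h => ⟨intree_isSome hij h.2.2.2.2.1, h⟩, fun h => h.2⟩
  have hR : ∀ m : Fin n,
      (∑ F : Fun n, if m ≠ i ∧ 0 < w i m ∧ IsInForest w F ∧ arcCount F = k ∧ InTreeOf F m j ∧
            ¬ InTreeOf F i j ∧ (F i).isSome then w i m * forestWeight w F else 0)
        = ∑ u : Fin n, ∑ F : Fun n,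
            if F i = some u ∧ m ≠ i ∧ 0 < w i m ∧ IsInForest w F ∧ arcCount F = k ∧
                InTreeOf F m j ∧ ¬ InTreeOf F i j
              then w i m * forestWeight w F else 0 := by
    intro m
    rw [← collapse i (fun F => w i m * forestWeight w F)
      (fun F => m ≠ i ∧ 0 < w i m ∧ IsInForest w F ∧ arcCount F = k ∧ InTreeOf F m j ∧
        ¬ InTreeOf F i j)]
    exact sum_cond_congr _ fun F => by tauto
  rw [Finset.sum_congr rfl fun m _ => hL m, Finset.sum_congr rfl fun m _ => hR m]
  exact swap_bij w hij k

end MFPT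


namespace MFPT

variable {n : ℕ}

lemma sum2_cond_congr (f : Fin n → Fun n → ℝ) {C D : Fin n → Fun n → Prop}
    {iC : ∀ m F, Decidable (C m F)} {iD : ∀ m F, Decidable (D m F)}
    (h : ∀ m F, C m F ↔ D m F) :
    (∑ m : Fin n, ∑ F : Fun n, @ite _ (C m F) (iC m F) (f m F) 0)
      = ∑ m : Fin n, ∑ F : Fun n, @ite _ (D m F) (iD m F) (f m F) 0 :=
  Finset.sum_congr rfl fun m _ => sum_cond_congr _ (h m)

lemma sum2_split (f : Fin n → Fun n → ℝ) (C D : Fin n → Fun n → Prop)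
    {iC : ∀ m F, Decidable (C m F)} [i1 : ∀ m F, Decidable (C m F ∧ D m F)]
    [i2 : ∀ m F, Decidable (C m F ∧ ¬ D m F)] :
    (∑ m : Fin n, ∑ F : Fun n, @ite _ (C m F) (iC m F) (f m F) 0)
      = (∑ m : Fin n, ∑ F : Fun n, @ite _ (C m F ∧ D m F) (i1 m F) (f m F) 0)
        + ∑ m : Fin n, ∑ F : Fun n, @ite _ (C m F ∧ ¬ D m F) (i2 m F) (f m F) 0 := by
  rw [← Finset.sum_add_distrib]
  exact Finset.sum_congr rfl fun m _ => sum_split _ _ _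

lemma pair_massage (w : Matrix (Fin n) (Fin n) ℝ) (hw : ∀ a b, 0 ≤ w a b)
    (hloop : ∀ a, w a a = 0) (i : Fin n) (f : Fun n → ℝ) (C : Fin n → Fun n → Prop)
    {iC : ∀ m F, Decidable (C m F)}
    [i1 : ∀ m F, Decidable (m ≠ i ∧ 0 < w i m ∧ C m F)] :
    (∑ m : Fin n, ∑ F : Fun n, @ite _ (C m F) (iC m F) (w i m * f F) 0)
      = ∑ m : Fin n, ∑ F : Fun n,
          @ite _ (m ≠ i ∧ 0 < w i m ∧ C m F) (i1 m F) (w i m * f F) 0 := by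
  refine Finset.sum_congr rfl fun m _ => Finset.sum_congr rfl fun F _ => ?_
  by_cases hC : C m F
  · by_cases hmi : m = i
    · have h0 : w i m = 0 := by rw [hmi]; exact hloop i
      simp [hC, h0, hmi, hloop i]
    · by_cases hwim : 0 < w i m
      · simp [hC, hmi, hwim]
      · have h0 : w i m = 0 := le_antisymm (not_lt.mp hwim) (hw i m)
        simp [hC, h0]
  · simp [hC]

lemma intree_update_fwd {w : Matrix (Fin n) (Fin n) ℝ} {F : Fun n} {i j m : Fin n}
    (hfor : IsInForest w F) (hFi : F i = none)
    (hnmi : ¬ Relation.ReflTransGen (Step F) m i)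
    (h : InTreeOf (Function.update F i (some m)) i j) : InTreeOf F m j := by
  have hji : j ≠ i := by
    intro hj
    have := h.2
    rw [hj, Function.update_self] at this
    cases this
  have hFj : F j = none := by
    have := h.2
    rwa [Function.update_of_ne hji] at this
  rcases h.1.cases_head with rfl | ⟨c, hic, hcj⟩
  · exact absurd rfl hji
  · have hcm : c = m := step_fun hic (step_update_same F i m)
    subst hcm
    rcases reach_congr_split agree_update hcj with h1 | h1
    · exact ⟨h1, hFj⟩
    · exact absurd h1 hnmi

lemma intree_update_bwd {w : Matrix (Fin n) (Fin n) ℝ} {F : Fun n} {i j m : Fin n}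
    (hij : i ≠ j) (hfor : IsInForest w F) (hFi : F i = none)
    (h : InTreeOf F m j) :
    ¬ Relation.ReflTransGen (Step F) m i ∧ InTreeOf (Function.update F i (some m)) i j := by
  have hFj : F j = none := h.2
  have hnmi : ¬ Relation.ReflTransGen (Step F) m i := by
    intro hmi
    rcases reach_total hmi h.1 with h1 | h1
    · exact hij (root_eq h1 hFi)
    · exact hij (root_eq h1 hFj).symm
  refine ⟨hnmi, ?_, ?_⟩
  · have hrmj : Relation.ReflTransGen (Step (Function.update F i (some m))) m j := by
      rcases reach_congr_split agree_update' h.1 with h1 | h1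
      · exact h1
      · exact absurd (reach_to agree_update h1) hnmi
    exact Relation.ReflTransGen.head (step_update_same F i m) hrmj
  · show Function.update F i (some m) j = none
    rw [Function.update_of_ne (Ne.symm hij)]; exact hFj

end MFPT


namespace MFPT

variable {n : ℕ}

lemma sum_mul_qsum (g : Fin n → ℝ) (f : Fun n → ℝ) (C : Fun n → Prop)
    {iC : ∀ F, Decidable (C F)} :
    (∑ m : Fin n, g m) * (∑ F : Fun n, @ite _ (C F) (iC F) (f F) 0)
      = ∑ m : Fin n, ∑ F : Fun n, @ite _ (C F) (iC F) (g m * f F) 0 := by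
  rw [Finset.sum_mul]
  refine Finset.sum_congr rfl fun m _ => ?_
  rw [Finset.mul_sum]
  exact Finset.sum_congr rfl fun F _ => by rw [mul_ite, mul_zero]

lemma sum_mul_qsum2 (g : Fin n → ℝ) (f : Fun n → ℝ) (C : Fin n → Fun n → Prop)
    {iC : ∀ m F, Decidable (C m F)} :
    (∑ m : Fin n, g m * ∑ F : Fun n, @ite _ (C m F) (iC m F) (f F) 0)
      = ∑ m : Fin n, ∑ F : Fun n, @ite _ (C m F) (iC m F) (g m * f F) 0 := by
  refine Finset.sum_congr rfl fun m _ => ?_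
  rw [Finset.mul_sum]
  exact Finset.sum_congr rfl fun F _ => by rw [mul_ite, mul_zero]

lemma key (w : Matrix (Fin n) (Fin n) ℝ) (hw : ∀ a b, 0 ≤ w a b) (hloop : ∀ a, w a a = 0)
    (i j : Fin n) (k : ℕ) :
    Qmat w (k + 1) i j + (∑ m : Fin n, w i m) * Qmat w k i j
      = (∑ m : Fin n, w i m * Qmat w k m j)
        + (if i = j then sigmaW w (k + 1) else 0) := by
  by_cases hij : i = j
  · subst hij
    rw [if_pos rfl]
    have e1 : Qmat w (k + 1) i i
        = ∑ F : Fun n, if IsInForest w F ∧ arcCount F = k + 1 ∧ F i = none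
            then forestWeight w F else 0 := by
      simp only [Qmat, Matrix.of_apply]
      exact sum_cond_congr _ fun F =>
        ⟨fun h => ⟨h.1, h.2.1, h.2.2.2⟩,
         fun h => ⟨h.1, h.2.1, Relation.ReflTransGen.refl, h.2.2⟩⟩
    have e2 : sigmaW w (k + 1)
        = (∑ F : Fun n, if IsInForest w F ∧ arcCount F = k + 1 ∧ F i = none
            then forestWeight w F else 0)
          + ∑ F : Fun n, if IsInForest w F ∧ arcCount F = k + 1 ∧ (F i).isSome
              then forestWeight w F else 0 := by
      unfold sigmaW
      rw [sum_split (fun F => forestWeight w F)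
        (fun F => IsInForest w F ∧ arcCount F = k + 1) (fun F => F i = none)]
      congr 1
      · exact sum_cond_congr _ fun F => by tauto
      · refine sum_cond_congr _ fun F => ?_
        have hsome : ¬ (F i = none) ↔ (F i).isSome = true := Option.ne_none_iff_isSome
        tauto
    have e3 : (∑ m : Fin n, w i m) * Qmat w k i i
        = (∑ m : Fin n, ∑ F : Fun n,
            if m ≠ i ∧ 0 < w i m ∧ IsInForest w F ∧ arcCount F = k ∧ F i = none ∧
                ¬ Relation.ReflTransGen (Step F) m i
              then w i m * forestWeight w F else 0)
          + ∑ m : Fin n, ∑ F : Fun n,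
              if m ≠ i ∧ 0 < w i m ∧ IsInForest w F ∧ arcCount F = k ∧ F i = none ∧
                  Relation.ReflTransGen (Step F) m i
                then w i m * forestWeight w F else 0 := by
      simp only [Qmat, Matrix.of_apply]
      rw [sum_mul_qsum (fun m => w i m) (fun F => forestWeight w F)
        (fun F => IsInForest w F ∧ arcCount F = k ∧ InTreeOf F i i)]
      rw [pair_massage w hw hloop i (fun F => forestWeight w F)
        (fun m F => IsInForest w F ∧ arcCount F = k ∧ InTreeOf F i i)]
      rw [sum2_split (fun m F => w i m * forestWeight w F)
        (fun m F => m ≠ i ∧ 0 < w i m ∧ IsInForest w F ∧ arcCount F = k ∧ InTreeOf F i i)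
        (fun m F => ¬ Relation.ReflTransGen (Step F) m i)]
      have hit : ∀ F : Fun n, InTreeOf F i i ↔ F i = none :=
        fun F => ⟨fun h => h.2, fun h => ⟨Relation.ReflTransGen.refl, h⟩⟩
      congr 1
      · refine sum2_cond_congr _ fun m F => ?_
        have := hit F; tauto
      · refine sum2_cond_congr _ fun m F => ?_
        have := hit F; tauto
    have e4 : (∑ F : Fun n, if IsInForest w F ∧ arcCount F = k + 1 ∧ (F i).isSome
          then forestWeight w F else 0)
        = ∑ m : Fin n, ∑ F : Fun n,
            if m ≠ i ∧ 0 < w i m ∧ IsInForest w F ∧ arcCount F = k ∧ F i = none ∧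
                ¬ Relation.ReflTransGen (Step F) m i
              then w i m * forestWeight w F else 0 := by
      refine Eq.trans ?_ ((sum_addArc w i k (fun _ => True)).trans ?_)
      · exact sum_cond_congr _ fun F => by tauto
      · exact sum2_cond_congr _ fun m F => by tauto
    have e5 : (∑ m : Fin n, w i m * Qmat w k m i)
        = ∑ m : Fin n, ∑ F : Fun n,
            if m ≠ i ∧ 0 < w i m ∧ IsInForest w F ∧ arcCount F = k ∧ F i = none ∧
                Relation.ReflTransGen (Step F) m i
              then w i m * forestWeight w F else 0 := by
      simp only [Qmat, Matrix.of_apply]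
      rw [sum_mul_qsum2 (fun m => w i m) (fun F => forestWeight w F)
        (fun m F => IsInForest w F ∧ arcCount F = k ∧ InTreeOf F m i)]
      rw [pair_massage w hw hloop i (fun F => forestWeight w F)
        (fun m F => IsInForest w F ∧ arcCount F = k ∧ InTreeOf F m i)]
      refine sum2_cond_congr _ fun m F => ?_
      have hit : InTreeOf F m i ↔ (Relation.ReflTransGen (Step F) m i ∧ F i = none) := Iff.rfl
      tauto
    rw [e1, e3, e5, e2, e4]
    ring
  · rw [if_neg hij]
    have f1 : Qmat w (k + 1) i j
        = ∑ F : Fun n, if IsInForest w F ∧ arcCount F = k + 1 ∧ (F i).isSome ∧ InTreeOf F i j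
            then forestWeight w F else 0 := by
      simp only [Qmat, Matrix.of_apply]
      refine sum_cond_congr _ fun F => ?_
      constructor
      · rintro ⟨h1, h2, h3⟩
        exact ⟨h1, h2, intree_isSome hij h3, h3⟩
      · rintro ⟨h1, h2, -, h3⟩; exact ⟨h1, h2, h3⟩
    have f2 : (∑ F : Fun n, if IsInForest w F ∧ arcCount F = k + 1 ∧ (F i).isSome ∧ InTreeOf F i j
          then forestWeight w F else 0)
        = ∑ m : Fin n, ∑ F : Fun n,
            if m ≠ i ∧ 0 < w i m ∧ IsInForest w F ∧ arcCount F = k ∧ F i = none ∧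
                InTreeOf F m j
              then w i m * forestWeight w F else 0 := by
      refine Eq.trans ?_ ((sum_addArc w i k (fun F => InTreeOf F i j)).trans ?_)
      · exact sum_cond_congr _ fun F => Iff.rfl
      refine sum2_cond_congr _ fun m F => ?_
      constructor
      · rintro ⟨h1, h2, h3, h4, h5, h6, h7⟩
        exact ⟨h1, h2, h3, h4, h5, intree_update_fwd h3 h5 h6 h7⟩
      · rintro ⟨h1, h2, h3, h4, h5, h6⟩
        obtain ⟨hr, hit⟩ := intree_update_bwd hij h3 h5 h6
        exact ⟨h1, h2, h3, h4, h5, hr, hit⟩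
    have f3 : (∑ m : Fin n, w i m) * Qmat w k i j
        = (∑ m : Fin n, ∑ F : Fun n,
            if m ≠ i ∧ 0 < w i m ∧ IsInForest w F ∧ arcCount F = k ∧ InTreeOf F i j ∧
                InTreeOf F m j
              then w i m * forestWeight w F else 0)
          + ∑ m : Fin n, ∑ F : Fun n,
              if m ≠ i ∧ 0 < w i m ∧ IsInForest w F ∧ arcCount F = k ∧ InTreeOf F i j ∧
                  ¬ InTreeOf F m j
                then w i m * forestWeight w F else 0 := by
      simp only [Qmat, Matrix.of_apply]
      rw [sum_mul_qsum (fun m => w i m) (fun F => forestWeight w F)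
        (fun F => IsInForest w F ∧ arcCount F = k ∧ InTreeOf F i j)]
      rw [pair_massage w hw hloop i (fun F => forestWeight w F)
        (fun m F => IsInForest w F ∧ arcCount F = k ∧ InTreeOf F i j)]
      rw [sum2_split (fun m F => w i m * forestWeight w F)
        (fun m F => m ≠ i ∧ 0 < w i m ∧ IsInForest w F ∧ arcCount F = k ∧ InTreeOf F i j)
        (fun m F => InTreeOf F m j)]
      congr 1
      · exact sum2_cond_congr _ fun m F => by tauto
      · exact sum2_cond_congr _ fun m F => by tauto
    have f4 : (∑ m : Fin n, w i m * Qmat w k m j)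
        = (∑ m : Fin n, ∑ F : Fun n,
            if m ≠ i ∧ 0 < w i m ∧ IsInForest w F ∧ arcCount F = k ∧ InTreeOf F m j ∧
                InTreeOf F i j
              then w i m * forestWeight w F else 0)
          + ((∑ m : Fin n, ∑ F : Fun n,
              if m ≠ i ∧ 0 < w i m ∧ IsInForest w F ∧ arcCount F = k ∧ InTreeOf F m j ∧
                  ¬ InTreeOf F i j ∧ (F i).isSome
                then w i m * forestWeight w F else 0)
            + ∑ m : Fin n, ∑ F : Fun n,
              if m ≠ i ∧ 0 < w i m ∧ IsInForest w F ∧ arcCount F = k ∧ F i = none ∧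
                  InTreeOf F m j
                then w i m * forestWeight w F else 0) := by
      simp only [Qmat, Matrix.of_apply]
      rw [sum_mul_qsum2 (fun m => w i m) (fun F => forestWeight w F)
        (fun m F => IsInForest w F ∧ arcCount F = k ∧ InTreeOf F m j)]
      rw [pair_massage w hw hloop i (fun F => forestWeight w F)
        (fun m F => IsInForest w F ∧ arcCount F = k ∧ InTreeOf F m j)]
      rw [sum2_split (fun m F => w i m * forestWeight w F)
        (fun m F => m ≠ i ∧ 0 < w i m ∧ IsInForest w F ∧ arcCount F = k ∧ InTreeOf F m j)
        (fun m F => InTreeOf F i j)]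
      congr 1
      · exact sum2_cond_congr _ fun m F => by tauto
      rw [sum2_split (fun m F => w i m * forestWeight w F)
        (fun m F => (m ≠ i ∧ 0 < w i m ∧ IsInForest w F ∧ arcCount F = k ∧ InTreeOf F m j) ∧
          ¬ InTreeOf F i j)
        (fun m F => (F i).isSome)]
      congr 1
      · exact sum2_cond_congr _ fun m F => by tauto
      · refine sum2_cond_congr _ fun m F => ?_
        have hnone : ¬ ((F i).isSome = true) ↔ F i = none := Option.not_isSome_iff_eq_none
        constructor
        · rintro ⟨⟨⟨h1, h2, h3, h4, h5⟩, -⟩, h7⟩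
          exact ⟨h1, h2, h3, h4, hnone.mp h7, h5⟩
        · rintro ⟨h1, h2, h3, h4, h5, h6⟩
          exact ⟨⟨⟨h1, h2, h3, h4, h6⟩, fun hc => hij (root_eq hc.1 h5)⟩, hnone.mpr h5⟩
    have f5 := sum_swapArc w hij k
    have f6 : (∑ m : Fin n, ∑ F : Fun n,
          if m ≠ i ∧ 0 < w i m ∧ IsInForest w F ∧ arcCount F = k ∧ InTreeOf F i j ∧
              InTreeOf F m j then w i m * forestWeight w F else 0)
        = ∑ m : Fin n, ∑ F : Fun n,
            if m ≠ i ∧ 0 < w i m ∧ IsInForest w F ∧ arcCount F = k ∧ InTreeOf F m j ∧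
                InTreeOf F i j then w i m * forestWeight w F else 0 :=
      sum2_cond_congr _ fun m F => by tauto
    rw [f1, f2, f3, f4, f6, ← f5]
    ring

end MFPT


namespace MFPT

variable {n : ℕ}

lemma arcCount_eq_zero_iff {F : Fun n} : arcCount F = 0 ↔ F = fun _ => none := by
  unfold arcCount
  rw [Finset.card_eq_zero, Finset.filter_eq_empty_iff]
  constructor
  · intro h; funext v
    have := h (Finset.mem_univ v)
    simpa [Option.not_isSome_iff_eq_none] using this
  · intro h v _
    rw [h]; simp

lemma isInForest_none (w : Matrix (Fin n) (Fin n) ℝ) :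
    IsInForest w (fun _ : Fin n => none) := by
  constructor
  · intro v u hv; cases hv
  · intro v hv
    rcases Relation.TransGen.head'_iff.mp hv with ⟨b, hb, -⟩
    cases hb

lemma forestWeight_none (w : Matrix (Fin n) (Fin n) ℝ) :
    forestWeight w (fun _ : Fin n => none) = 1 := by
  unfold forestWeight; simp

lemma Qmat_zero (w : Matrix (Fin n) (Fin n) ℝ) :
    Qmat w 0 = (1 : Matrix (Fin n) (Fin n) ℝ) := by
  ext i j
  simp only [Qmat, Matrix.of_apply, Matrix.one_apply]
  rw [Finset.sum_eq_single (fun _ : Fin n => none)]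
  · by_cases hij : i = j
    · subst hij
      rw [if_pos ⟨isInForest_none w, arcCount_eq_zero_iff.mpr rfl,
        Relation.ReflTransGen.refl, rfl⟩, if_pos rfl]
      exact forestWeight_none w
    · rw [if_neg, if_neg hij]
      rintro ⟨-, -, hr, -⟩
      exact hij (root_eq hr rfl)
  · intro F _ hF
    rw [if_neg]
    rintro ⟨-, h0, -⟩
    exact hF (arcCount_eq_zero_iff.mp h0)
  · intro h; exact absurd (Finset.mem_univ _) h

lemma sigmaW_zero (w : Matrix (Fin n) (Fin n) ℝ) : sigmaW w 0 = 1 := by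
  unfold sigmaW
  rw [Finset.sum_eq_single (fun _ : Fin n => none)]
  · rw [if_pos ⟨isInForest_none w, arcCount_eq_zero_iff.mpr rfl⟩]
    exact forestWeight_none w
  · intro F _ hF
    rw [if_neg]
    rintro ⟨-, h0⟩
    exact hF (arcCount_eq_zero_iff.mp h0)
  · intro h; exact absurd (Finset.mem_univ _) h

lemma arcCount_le (F : Fun n) : arcCount F ≤ n := by
  unfold arcCount
  calc (Finset.univ.filter fun v => (F v).isSome).card ≤ Finset.univ.card :=
        Finset.card_filter_le _ _
    _ = n := Finset.card_fin n

lemma sigmaW_eq_zero (w : Matrix (Fin n) (Fin n) ℝ) {c : ℕ} (hc : n < c) :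
    sigmaW w c = 0 := by
  unfold sigmaW
  refine Finset.sum_eq_zero fun F _ => ?_
  rw [if_neg]
  rintro ⟨-, h⟩
  have := arcCount_le F
  omega

lemma diag_sum (w : Matrix (Fin n) (Fin n) ℝ) (c : ℕ) :
    (∑ i : Fin n, Qmat w c i i) = ((n - c : ℕ) : ℝ) * sigmaW w c := by
  simp only [Qmat, Matrix.of_apply]
  rw [Finset.sum_comm]
  unfold sigmaW
  rw [Finset.mul_sum]
  refine Finset.sum_congr rfl fun F _ => ?_
  by_cases hF : IsInForest w F ∧ arcCount F = c
  · have h1 : ∀ i : Fin n,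
        (if IsInForest w F ∧ arcCount F = c ∧ InTreeOf F i i then forestWeight w F else 0)
          = if F i = none then forestWeight w F else 0 := fun i => by
      refine if_congr ?_ rfl rfl
      constructor
      · rintro ⟨-, -, h⟩; exact h.2
      · intro h; exact ⟨hF.1, hF.2, Relation.ReflTransGen.refl, h⟩
    rw [Finset.sum_congr rfl fun i _ => h1 i, ← Finset.sum_filter, Finset.sum_const]
    have hcard : (Finset.univ.filter fun i : Fin n => F i = none).card = n - c := by
      have h2 := Finset.card_filter_add_card_filter_not
        (s := (Finset.univ : Finset (Fin n))) (p := fun i : Fin n => (F i).isSome)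
      have h3 : (Finset.univ.filter fun i : Fin n => ¬ ((F i).isSome = true))
          = Finset.univ.filter fun i : Fin n => F i = none := by
        refine Finset.filter_congr fun i _ => ?_
        simp [Option.not_isSome_iff_eq_none]
      rw [h3] at h2
      have h4 : (Finset.univ.filter fun i : Fin n => (F i).isSome).card = c := hF.2
      have h5 : (Finset.univ : Finset (Fin n)).card = n := Finset.card_fin n
      omega
    rw [hcard, nsmul_eq_mul, if_pos hF]
  · have h1 : ∀ i : Fin n,
        (if IsInForest w F ∧ arcCount F = c ∧ InTreeOf F i i then forestWeight w F else 0)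
          = 0 := fun i => if_neg (by rintro ⟨a, b, -⟩; exact hF ⟨a, b⟩)
    rw [Finset.sum_congr rfl fun i _ => h1 i, if_neg hF]
    simp

lemma lap_mul_Qmat (w : Matrix (Fin n) (Fin n) ℝ) (hw : ∀ a b, 0 ≤ w a b)
    (hloop : ∀ a, w a a = 0) (k : ℕ) (i j : Fin n) :
    (lap w * Qmat w k) i j
      = (if i = j then sigmaW w (k + 1) else 0) - Qmat w (k + 1) i j := by
  have hkey := key w hw hloop i j k
  have hmul : (lap w * Qmat w k) i j
      = (∑ m : Fin n, w i m) * Qmat w k i j - ∑ m : Fin n, w i m * Qmat w k m j := by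
    rw [Matrix.mul_apply]
    have hterm : ∀ m : Fin n, lap w i m * Qmat w k m j
        = (if i = m then (∑ l : Fin n, w i l) * Qmat w k i j else 0)
          - w i m * Qmat w k m j := by
      intro m
      simp only [lap, Matrix.of_apply]
      by_cases him : i = m
      · rw [if_pos him, if_pos him, ← him]
        have hsum : ∑ l ∈ Finset.univ.erase i, w i l = ∑ l : Fin n, w i l :=
          Finset.sum_erase _ (hloop i)
        rw [hsum, hloop i]
        ring
      · rw [if_neg him, if_neg him]; ring
    rw [Finset.sum_congr rfl fun m _ => hterm m, Finset.sum_sub_distrib,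
      Finset.sum_ite_eq Finset.univ i fun _ => (∑ l : Fin n, w i l) * Qmat w k i j,
      if_pos (Finset.mem_univ i)]
  rw [hmul]
  linarith [hkey]

lemma trace_lap_Qmat (w : Matrix (Fin n) (Fin n) ℝ) (hw : ∀ a b, 0 ≤ w a b)
    (hloop : ∀ a, w a a = 0) (k : ℕ) :
    Matrix.trace (lap w * Qmat w k) = ((k : ℝ) + 1) * sigmaW w (k + 1) := by
  have h1 : Matrix.trace (lap w * Qmat w k)
      = ∑ i : Fin n, ((if i = i then sigmaW w (k + 1) else 0) - Qmat w (k + 1) i i) := by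
    unfold Matrix.trace
    exact Finset.sum_congr rfl fun i _ => lap_mul_Qmat w hw hloop k i i
  rw [h1]
  have h2 : ∀ i : Fin n, ((if i = i then sigmaW w (k + 1) else 0) - Qmat w (k + 1) i i)
      = sigmaW w (k + 1) - Qmat w (k + 1) i i := fun i => by rw [if_pos rfl]
  rw [Finset.sum_congr rfl fun i _ => h2 i, Finset.sum_sub_distrib, Finset.sum_const,
    diag_sum w (k + 1), Finset.card_fin, nsmul_eq_mul]
  by_cases hn : k + 1 ≤ n
  · have hcast : ((n - (k + 1) : ℕ) : ℝ) = (n : ℝ) - ((k : ℝ) + 1) := by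
      rw [Nat.cast_sub hn]; push_cast; ring
    rw [hcast]; ring
  · rw [sigmaW_eq_zero w (by omega)]; ring

end MFPT

namespace MFPT

/-- Chebotarev–Agaev recursion. With `Q 0 = I`,
`σ_{k+1} = tr(L Q_k)/(k+1)` and `Q_{k+1} = -L Q_k + σ_{k+1} I`, the quantities `σ_k` and
`Q_k` are the total forest weights `sigmaW` and forest-weight matrices `Qmat`. -/
theorem forest_recursion {n : ℕ} (w : Matrix (Fin n) (Fin n) ℝ)
    (hw : ∀ i j, 0 ≤ w i j) (hloop : ∀ i, w i i = 0)
    (s : ℕ → ℝ) (Q : ℕ → Matrix (Fin n) (Fin n) ℝ)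
    (hQ0 : Q 0 = 1) (hs0 : s 0 = 1)
    (hs : ∀ k : ℕ, s (k + 1) = Matrix.trace (lap w * Q k) / (k + 1))
    (hQ : ∀ k : ℕ, Q (k + 1) = -(lap w * Q k) + s (k + 1) • (1 : Matrix (Fin n) (Fin n) ℝ)) :
    (∀ k, s k = sigmaW w k) ∧ ∀ k, Q k = Qmat w k := by
  have main : ∀ k : ℕ, s k = sigmaW w k ∧ Q k = Qmat w k := by
    intro k
    induction k with
    | zero => exact ⟨hs0.trans (sigmaW_zero w).symm, hQ0.trans (Qmat_zero w).symm⟩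
    | succ k ih =>
      have hk1 : ((k : ℝ) + 1) ≠ 0 := by positivity
      have hsk : s (k + 1) = sigmaW w (k + 1) := by
        rw [hs k, ih.2, trace_lap_Qmat w hw hloop k]
        exact mul_div_cancel_left₀ _ hk1
      refine ⟨hsk, ?_⟩
      rw [hQ k, ih.2, hsk]
      ext i j
      simp only [Matrix.add_apply, Matrix.neg_apply, Matrix.smul_apply, Matrix.one_apply,
        smul_eq_mul]
      rw [lap_mul_Qmat w hw hloop k i j]
      by_cases hij : i = j <;> simp [hij]
  exact ⟨fun k => (main k).1, fun k => (main k).2⟩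

end MFPT
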